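/- In intuitionistic logic, A is par-projective if and only if U(A) → A is projective, where U(A) is the uniform post-interpolant of A with respect to the parameters. -/

import Mathlib

inductive Form (var par : Type) : Type where
  | bot : Form var par
  | v : var → Form var par
  | p : par → Form var par
  | and : Form var par → Form var par → Form var par
  | or : Form var par → Form var par → Form var par
  | imp : Form var par → Form var par → Form var par

namespace Form
variable {var par : Type}

def neg (A : Form var par) : Form var par := A.imp .bot
def top : Form var par := Form.neg .bot
def fiff (A B : Form var par) : Form var par := (A.imp B).and (B.imp A)

/-- `varFree A`: `A` contains no variables (it lies in the parameter-only sublanguage). -/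
def varFree : Form var par → Prop
  | .bot => True
  | .v _ => False
  | .p _ => True
  | .and A B => varFree A ∧ varFree B
  | .or A B => varFree A ∧ varFree B
  | .imp A B => varFree A ∧ varFree B

/-- Substitutions act on variables, fix parameters, and commute with connectives. -/
def subst (θ : var → Form var par) : Form var par → Form var par
  | .bot => .bot
  | .v x => θ x
  | .p q => .p q
  | .and A B => (subst θ A).and (subst θ B)
  | .or A B => (subst θ A).or (subst θ B)
  | .imp A B => (subst θ A).imp (subst θ B)

end Form

/-- Hilbert-style provability: `cl = false` is intuitionistic logic (IPC),
`cl = true` is classical logic (CPC). -/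
inductive Prv {var par : Type} (cl : Bool) : Form var par → Prop where
  | mp {A B : Form var par} : Prv cl (A.imp B) → Prv cl A → Prv cl B
  | k {A B : Form var par} : Prv cl (A.imp (B.imp A))
  | s {A B C : Form var par} :
      Prv cl ((A.imp (B.imp C)).imp ((A.imp B).imp (A.imp C)))
  | andI {A B : Form var par} : Prv cl (A.imp (B.imp (A.and B)))
  | andE1 {A B : Form var par} : Prv cl ((A.and B).imp A)
  | andE2 {A B : Form var par} : Prv cl ((A.and B).imp B)
  | orI1 {A B : Form var par} : Prv cl (A.imp (A.or B))
  | orI2 {A B : Form var par} : Prv cl (B.imp (A.or B))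
  | orE {A B C : Form var par} :
      Prv cl ((A.imp C).imp ((B.imp C).imp ((A.or B).imp C)))
  | exf {A : Form var par} : Prv cl (Form.bot.imp A)
  | dne {A : Form var par} : cl = true → Prv cl (A.neg.neg.imp A)

/-- `U` is the uniform post-interpolant of `A` with respect to the parameters. -/
def IsUPI {var par : Type} (cl : Bool) (A U : Form var par) : Prop :=
  U.varFree ∧ Prv cl (A.imp U) ∧
    ∀ C : Form var par, C.varFree → Prv cl (A.imp C) → Prv cl (U.imp C)


section Infra
variable {var par : Type} {cl : Bool}

namespace PL

theorem d {A B C : Form var par} (h1 : Prv cl (C.imp (A.imp B)))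
    (h2 : Prv cl (C.imp A)) : Prv cl (C.imp B) :=
  (Prv.s.mp h1).mp h2

theorem di {A B : Form var par} (h : Prv cl B) : Prv cl (A.imp B) := Prv.k.mp h

theorem ii {A : Form var par} : Prv cl (A.imp A) := d Prv.k (Prv.k (B := A))

theorem trans {A B C : Form var par} (h1 : Prv cl (A.imp B)) (h2 : Prv cl (B.imp C)) :
    Prv cl (A.imp C) := d (di h2) h1

theorem bcomb {C P Q : Form var par} (h : Prv cl (P.imp Q)) :
    Prv cl ((C.imp P).imp (C.imp Q)) := Prv.s.mp (di h)

theorem d2 {H B P Q : Form var par} (h1 : Prv cl (H.imp (P.imp Q)))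
    (h2 : Prv cl (H.imp (B.imp P))) : Prv cl (H.imp (B.imp Q)) :=
  d (trans (trans h1 Prv.k) Prv.s) h2

theorem swap {A B D : Form var par} :
    Prv cl ((A.imp (B.imp D)).imp (B.imp (A.imp D))) :=
  d2 Prv.s (di Prv.k)

def Imps : List (Form var par) → Form var par → Form var par
  | [], A => A
  | C :: Γ, A => C.imp (Imps Γ A)

theorem imps_self {A : Form var par} : ∀ Γ : List (Form var par), Prv cl (A.imp (Imps Γ A))
  | [] => ii
  | _ :: Γ => trans (imps_self Γ) Prv.k

theorem imps_mem {A : Form var par} : ∀ {Γ : List (Form var par)}, A ∈ Γ → Prv cl (Imps Γ A)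
  | C :: Γ, h => by
    rcases List.mem_cons.mp h with h | h
    · subst h; exact imps_self Γ
    · exact di (imps_mem h)

theorem imps_thm {A : Form var par} (h : Prv cl A) :
    ∀ Γ : List (Form var par), Prv cl (Imps Γ A)
  | [] => h
  | _ :: Γ => di (imps_thm h Γ)

theorem imps_mp_thm {A B : Form var par} :
    ∀ Γ : List (Form var par), Prv cl ((Imps Γ (A.imp B)).imp ((Imps Γ A).imp (Imps Γ B)))
  | [] => ii
  | C :: Γ => trans (bcomb (imps_mp_thm Γ)) Prv.s

theorem exch {A B : Form var par} :
    ∀ Γ : List (Form var par), Prv cl ((A.imp (Imps Γ B)).imp (Imps Γ (A.imp B)))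
  | [] => ii
  | C :: Γ => trans swap (bcomb (exch Γ))

inductive ND {var par : Type} (cl : Bool) : List (Form var par) → Form var par → Prop where
  | hyp {Γ A} : A ∈ Γ → ND cl Γ A
  | thm {Γ A} : Prv cl A → ND cl Γ A
  | mp {Γ A B} : ND cl Γ (A.imp B) → ND cl Γ A → ND cl Γ B
  | intro {Γ A B} : ND cl (A :: Γ) B → ND cl Γ (A.imp B)

theorem nd_sound {Γ : List (Form var par)} {A : Form var par} (h : ND cl Γ A) :
    Prv cl (Imps Γ A) := by
  induction h with
  | hyp h => exact imps_mem h
  | thm h => exact imps_thm h _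
  | mp _ _ ih1 ih2 => exact ((imps_mp_thm _).mp ih1).mp ih2
  | intro _ ih => exact (exch _).mp ih

theorem nd1 {H A : Form var par} (h : ND cl [H] A) : Prv cl (H.imp A) := nd_sound h

namespace ND
theorem hyp0 {Γ : List (Form var par)} {A : Form var par} : ND cl (A :: Γ) A :=
  .hyp List.mem_cons_self
theorem wk {Γ : List (Form var par)} {A B : Form var par} (h : A ∈ Γ) :
    ND cl (B :: Γ) A := .hyp (List.mem_cons_of_mem _ h)
theorem fiffI {Γ : List (Form var par)} {A B : Form var par}
    (h1 : ND cl Γ (A.imp B)) (h2 : ND cl Γ (B.imp A)) : ND cl Γ (A.fiff B) :=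
  .mp (.mp (.thm Prv.andI) h1) h2
theorem fiff1 {Γ : List (Form var par)} {A B : Form var par}
    (h : ND cl Γ (A.fiff B)) : ND cl Γ (A.imp B) := .mp (.thm Prv.andE1) h
theorem fiff2 {Γ : List (Form var par)} {A B : Form var par}
    (h : ND cl Γ (A.fiff B)) : ND cl Γ (B.imp A) := .mp (.thm Prv.andE2) h
theorem andI' {Γ : List (Form var par)} {A B : Form var par}
    (h1 : ND cl Γ A) (h2 : ND cl Γ B) : ND cl Γ (A.and B) :=
  .mp (.mp (.thm Prv.andI) h1) h2
theorem andE1' {Γ : List (Form var par)} {A B : Form var par}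
    (h : ND cl Γ (A.and B)) : ND cl Γ A := .mp (.thm Prv.andE1) h
theorem andE2' {Γ : List (Form var par)} {A B : Form var par}
    (h : ND cl Γ (A.and B)) : ND cl Γ B := .mp (.thm Prv.andE2) h
theorem orI1' {Γ : List (Form var par)} {A B : Form var par}
    (h : ND cl Γ A) : ND cl Γ (A.or B) := .mp (.thm Prv.orI1) h
theorem orI2' {Γ : List (Form var par)} {A B : Form var par}
    (h : ND cl Γ B) : ND cl Γ (A.or B) := .mp (.thm Prv.orI2) h
theorem orE' {Γ : List (Form var par)} {A B C : Form var par}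
    (h : ND cl Γ (A.or B)) (h1 : ND cl (A :: Γ) C) (h2 : ND cl (B :: Γ) C) :
    ND cl Γ C :=
  .mp (.mp (.mp (.thm Prv.orE) (.intro h1)) (.intro h2)) h
end ND

theorem iff_refl {A : Form var par} : Prv cl (A.fiff A) := (Prv.andI.mp ii).mp ii

theorem cong_and {H A1 A2 B1 B2 : Form var par}
    (hA : Prv cl (H.imp (A1.fiff A2))) (hB : Prv cl (H.imp (B1.fiff B2))) :
    Prv cl (H.imp ((A1.and B1).fiff (A2.and B2))) := by
  refine nd1 (ND.fiffI (.intro ?_) (.intro ?_))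
  · have iffA : ND cl [A1.and B1, H] (A1.fiff A2) := .mp (.thm hA) (.hyp (by simp))
    have iffB : ND cl [A1.and B1, H] (B1.fiff B2) := .mp (.thm hB) (.hyp (by simp))
    exact ND.andI' (.mp (ND.fiff1 iffA) (ND.andE1' ND.hyp0))
      (.mp (ND.fiff1 iffB) (ND.andE2' ND.hyp0))
  · have iffA : ND cl [A2.and B2, H] (A1.fiff A2) := .mp (.thm hA) (.hyp (by simp))
    have iffB : ND cl [A2.and B2, H] (B1.fiff B2) := .mp (.thm hB) (.hyp (by simp))
    exact ND.andI' (.mp (ND.fiff2 iffA) (ND.andE1' ND.hyp0))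
      (.mp (ND.fiff2 iffB) (ND.andE2' ND.hyp0))

theorem cong_or {H A1 A2 B1 B2 : Form var par}
    (hA : Prv cl (H.imp (A1.fiff A2))) (hB : Prv cl (H.imp (B1.fiff B2))) :
    Prv cl (H.imp ((A1.or B1).fiff (A2.or B2))) := by
  refine nd1 (ND.fiffI (.intro ?_) (.intro ?_))
  · refine ND.orE' ND.hyp0 ?_ ?_
    · exact ND.orI1' (.mp (ND.fiff1 (.mp (.thm hA) (.hyp (by simp)))) ND.hyp0)
    · exact ND.orI2' (.mp (ND.fiff1 (.mp (.thm hB) (.hyp (by simp)))) ND.hyp0)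
  · refine ND.orE' ND.hyp0 ?_ ?_
    · exact ND.orI1' (.mp (ND.fiff2 (.mp (.thm hA) (.hyp (by simp)))) ND.hyp0)
    · exact ND.orI2' (.mp (ND.fiff2 (.mp (.thm hB) (.hyp (by simp)))) ND.hyp0)

theorem cong_imp {H A1 A2 B1 B2 : Form var par}
    (hA : Prv cl (H.imp (A1.fiff A2))) (hB : Prv cl (H.imp (B1.fiff B2))) :
    Prv cl (H.imp ((A1.imp B1).fiff (A2.imp B2))) := by
  refine nd1 (ND.fiffI (.intro (.intro ?_)) (.intro (.intro ?_)))
  · have a1 : ND cl [A2, A1.imp B1, H] A1 :=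
      .mp (ND.fiff2 (.mp (.thm hA) (.hyp (by simp)))) ND.hyp0
    exact .mp (ND.fiff1 (.mp (.thm hB) (.hyp (by simp)))) (.mp (.hyp (by simp)) a1)
  · have a2 : ND cl [A1, A2.imp B2, H] A2 :=
      .mp (ND.fiff1 (.mp (.thm hA) (.hyp (by simp)))) ND.hyp0
    exact .mp (ND.fiff2 (.mp (.thm hB) (.hyp (by simp)))) (.mp (.hyp (by simp)) a2)

theorem cong {σ τ : var → Form var par} {H : Form var par}
    (h : ∀ x, Prv cl (H.imp ((σ x).fiff (τ x)))) :
    ∀ C : Form var par, Prv cl (H.imp ((Form.subst σ C).fiff (Form.subst τ C)))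
  | .bot => di iff_refl
  | .v x => h x
  | .p q => di iff_refl
  | .and A B => cong_and (cong h A) (cong h B)
  | .or A B => cong_or (cong h A) (cong h B)
  | .imp A B => cong_imp (cong h A) (cong h B)

theorem subst_v_id : ∀ C : Form var par, Form.subst Form.v C = C
  | .bot => rfl
  | .v x => rfl
  | .p q => rfl
  | .and A B => by simp [Form.subst, subst_v_id A, subst_v_id B]
  | .or A B => by simp [Form.subst, subst_v_id A, subst_v_id B]
  | .imp A B => by simp [Form.subst, subst_v_id A, subst_v_id B]

theorem subst_varFree (θ : var → Form var par) :
    ∀ C : Form var par, C.varFree → Form.subst θ C = C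
  | .bot, _ => rfl
  | .v x, h => absurd h (by simp [Form.varFree])
  | .p q, _ => rfl
  | .and A B, h => by
      simp [Form.subst, subst_varFree θ A h.1, subst_varFree θ B h.2]
  | .or A B, h => by
      simp [Form.subst, subst_varFree θ A h.1, subst_varFree θ B h.2]
  | .imp A B, h => by
      simp [Form.subst, subst_varFree θ A h.1, subst_varFree θ B h.2]

theorem subst_prv {A : Form var par} (θ : var → Form var par) (h : Prv cl A) :
    Prv cl (Form.subst θ A) := by
  induction h with
  | mp _ _ ih1 ih2 => exact Prv.mp ih1 ih2
  | k => exact Prv.k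
  | s => exact Prv.s
  | andI => exact Prv.andI
  | andE1 => exact Prv.andE1
  | andE2 => exact Prv.andE2
  | orI1 => exact Prv.orI1
  | orI2 => exact Prv.orI2
  | orE => exact Prv.orE
  | exf => exact Prv.exf
  | dne hcl => exact Prv.dne hcl

end PL
end Infra

section Main
variable {var par : Type} {cl : Bool}
namespace PL

theorem key1 {A U T X : Form var par} (hx : Prv cl (A.imp (T.fiff X))) :
    Prv cl ((U.imp A).imp (((U.imp T).and (U.or X)).fiff X)) := by
  refine nd1 (ND.fiffI (.intro ?_) (.intro ?_))
  · -- ctx [(U→T)∧(U∨X), U→A] ⊢ X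
    refine ND.orE' (ND.andE2' ND.hyp0) ?_ ?_
    · -- ctx [U, σ, U→A] ⊢ X
      have hA : ND cl [U, (U.imp T).and (U.or X), U.imp A] A :=
        .mp (.hyp (by simp)) ND.hyp0
      have hs : ND cl [U, (U.imp T).and (U.or X), U.imp A] ((U.imp T).and (U.or X)) :=
        .hyp (by simp)
      have hT : ND cl [U, (U.imp T).and (U.or X), U.imp A] T :=
        .mp (ND.andE1' hs) ND.hyp0
      exact .mp (ND.fiff1 (.mp (.thm hx) hA)) hT
    · exact ND.hyp0
  · -- ctx [X, U→A] ⊢ σ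
    refine ND.andI' (.intro ?_) (ND.orI2' ND.hyp0)
    have hA : ND cl [U, X, U.imp A] A := .mp (.hyp (by simp)) ND.hyp0
    exact .mp (ND.fiff2 (.mp (.thm hx) hA)) (.hyp (by simp))

theorem key2 {U T X : Form var par} :
    Prv cl (U.imp (((U.imp T).and (U.or X)).fiff T)) := by
  refine nd1 (ND.fiffI (.intro ?_) (.intro ?_))
  · exact .mp (ND.andE1' ND.hyp0) (.hyp (by simp))
  · exact ND.andI' (.intro (.hyp (by simp))) (ND.orI1' (.hyp (by simp)))

end PL
end Main

/-- Intuitionistically, `A` is par-projective iff `U(A) → A` is projective. -/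
theorem par_projective_iff_upi_imp_projective {var par : Type} (A U : Form var par)
    (hU : IsUPI false A U) :
    (∃ (E : Form var par) (θ : var → Form var par), E.varFree ∧
        (∀ x : var, Prv false (A.imp ((θ x).fiff (Form.v x)))) ∧
        Prv false ((Form.subst θ A).fiff E)) ↔
    (∃ θ : var → Form var par, Prv false (Form.subst θ (U.imp A)) ∧
        ∀ x : var, Prv false ((U.imp A).imp ((θ x).fiff (Form.v x)))) := by
  obtain ⟨hUvf, hAU, hUmin⟩ := hU
  constructor
  · rintro ⟨E, θ, hE, h1, h2⟩
    have hAiff : Prv false (A.imp ((Form.subst θ A).fiff (Form.subst Form.v A))) :=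
      PL.cong h1 A
    rw [PL.subst_v_id A] at hAiff
    have hAθA : Prv false (A.imp (Form.subst θ A)) :=
      PL.d (PL.trans hAiff Prv.andE2) PL.ii
    have hAE : Prv false (A.imp E) := PL.trans hAθA (Prv.andE1.mp h2)
    have hUθA : Prv false (U.imp (Form.subst θ A)) :=
      PL.trans (hUmin E hE hAE) (Prv.andE2.mp h2)
    refine ⟨fun x => (U.imp (θ x)).and (U.or (Form.v x)), ?_, fun x => PL.key1 (h1 x)⟩
    have hUσθ : Prv false (U.imp
        ((Form.subst (fun x => (U.imp (θ x)).and (U.or (Form.v x))) A).fiff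
          (Form.subst θ A))) :=
      PL.cong (fun x => PL.key2) A
    have hUσA : Prv false (U.imp
        (Form.subst (fun x => (U.imp (θ x)).and (U.or (Form.v x))) A)) :=
      PL.d (PL.trans hUσθ Prv.andE2) hUθA
    have heq : Form.subst (fun x => (U.imp (θ x)).and (U.or (Form.v x))) (U.imp A)
        = U.imp (Form.subst (fun x => (U.imp (θ x)).and (U.or (Form.v x))) A) := by
      simp [Form.subst, PL.subst_varFree _ U hUvf]
    rw [heq]
    exact hUσA
  · rintro ⟨θ, hθ1, hθ2⟩
    have hsub : Form.subst θ (U.imp A) = U.imp (Form.subst θ A) := by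
      simp [Form.subst, PL.subst_varFree θ U hUvf]
    rw [hsub] at hθ1
    have hθAU : Prv false ((Form.subst θ A).imp U) := by
      have h := PL.subst_prv θ hAU
      simpa [Form.subst, PL.subst_varFree θ U hUvf] using h
    exact ⟨U, θ, hUvf, fun x => PL.trans Prv.k (hθ2 x), (Prv.andI.mp hθAU).mp hθ1⟩
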